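/- Let M be a cyclic k-module. For every n ≥ 1, the Hochschild boundary b and the Connes operator B satisfy the anticommutation relation b ∘ B + B ∘ b = 0 as maps M_n → M_{n+1}; that is, b_{n+2} ∘ B_n + B_{n−1} ∘ b_n = 0. (For n = 0 the identity reads b ∘ B = 0 on M_0.) -/
import Mathlib


universe u v

/-- A cyclic `k`-module: a simplicial `k`-module `M` together with cyclic operators `c`
satisfying `c^(n+1) = id`, `dᵢ c = c dᵢ₋₁` and `sᵢ c = c sᵢ₋₁` for `1 ≤ i ≤ n`,
`d₀ c = dₙ`, and `s₀ c = c² sₙ`. Here `d n i : M (n+1) →ₗ M n` is the `i`-th face map and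
`s n i : M n →ₗ M (n+1)` the `i`-th degeneracy. -/
structure CyclicModule (k : Type u) [CommRing k] where
  M : ℕ → Type v
  [acg : ∀ n, AddCommGroup (M n)]
  [mod : ∀ n, Module k (M n)]
  d : ∀ n : ℕ, Fin (n + 2) → (M (n + 1) →ₗ[k] M n)
  s : ∀ n : ℕ, Fin (n + 1) → (M n →ₗ[k] M (n + 1))
  c : ∀ n : ℕ, M n →ₗ[k] M n
  d_comp_d : ∀ (n : ℕ) (i j : Fin (n + 2)), i ≤ j →
    (d n i) ∘ₗ (d (n + 1) j.succ) = (d n j) ∘ₗ (d (n + 1) i.castSucc)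
  d_comp_s_le : ∀ (n : ℕ) (i : Fin (n + 2)) (j : Fin (n + 1)), (i : ℕ) ≤ (j : ℕ) →
    (d (n + 1) i.castSucc) ∘ₗ (s (n + 1) j.succ) = (s n j) ∘ₗ (d n i)
  d_comp_s_self : ∀ (n : ℕ) (i : Fin (n + 1)),
    (d n i.castSucc) ∘ₗ (s n i) = LinearMap.id
  d_comp_s_succ : ∀ (n : ℕ) (i : Fin (n + 1)),
    (d n i.succ) ∘ₗ (s n i) = LinearMap.id
  d_comp_s_gt : ∀ (n : ℕ) (i : Fin (n + 2)) (j : Fin (n + 1)), (j : ℕ) < (i : ℕ) →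
    (d (n + 1) i.succ) ∘ₗ (s (n + 1) j.castSucc) = (s n j) ∘ₗ (d n i)
  s_comp_s : ∀ (n : ℕ) (i j : Fin (n + 1)), i ≤ j →
    (s (n + 1) i.castSucc) ∘ₗ (s n j) = (s (n + 1) j.succ) ∘ₗ (s n i)
  c_pow : ∀ n : ℕ, ((c n : Module.End k (M n)) ^ (n + 1)) = 1
  d_comp_c : ∀ (n : ℕ) (j : Fin (n + 1)),
    (d n j.succ) ∘ₗ (c (n + 1)) = (c n) ∘ₗ (d n j.castSucc)
  d_zero_c : ∀ n : ℕ, (d n 0) ∘ₗ (c (n + 1)) = d n (Fin.last (n + 1))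
  s_comp_c : ∀ (n : ℕ) (j : Fin n),
    (s n j.succ) ∘ₗ (c n) = (c (n + 1)) ∘ₗ (s n j.castSucc)
  s_zero_c : ∀ n : ℕ, (s n 0) ∘ₗ (c n) = (c (n + 1)) ∘ₗ (c (n + 1)) ∘ₗ (s n (Fin.last n))

attribute [instance] CyclicModule.acg CyclicModule.mod

namespace CyclicModule

variable {k : Type u} [CommRing k] (X : CyclicModule k)

/-- The Hochschild boundary `b = ∑_{i=0}^{n+1} (-1)^i dᵢ : M (n+1) →ₗ M n`. -/
noncomputable def b (n : ℕ) : X.M (n + 1) →ₗ[k] X.M n :=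
  ∑ i : Fin (n + 2), ((-1 : k) ^ (i : ℕ)) • X.d n i

/-- The operator `b' = ∑_{i=0}^{n} (-1)^i dᵢ : M (n+1) →ₗ M n` (all faces but the last). -/
noncomputable def b' (n : ℕ) : X.M (n + 1) →ₗ[k] X.M n :=
  ∑ i : Fin (n + 1), ((-1 : k) ^ (i : ℕ)) • X.d n i.castSucc

/-- The signed cyclic operator `t = (-1)^n c` on `M n`. -/
noncomputable def t (n : ℕ) : X.M n →ₗ[k] X.M n := ((-1 : k) ^ n) • X.c n

/-- The norm operator `N = ∑_{i=0}^{n} tⁱ` on `M n`. -/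
noncomputable def N (n : ℕ) : X.M n →ₗ[k] X.M n :=
  ∑ i ∈ Finset.range (n + 1), ((X.t n : Module.End k (X.M n)) ^ i)

/-- The extra degeneracy `s₋₁ = c sₙ : M n →ₗ M (n+1)`. -/
noncomputable def sNeg (n : ℕ) : X.M n →ₗ[k] X.M (n + 1) :=
  (X.c (n + 1)) ∘ₗ (X.s n (Fin.last n))

/-- The Connes boundary operator `B = (id - t) s₋₁ N : M n →ₗ M (n+1)`. -/
noncomputable def B (n : ℕ) : X.M n →ₗ[k] X.M (n + 1) :=
  (LinearMap.id - X.t (n + 1)) ∘ₗ (X.sNeg n) ∘ₗ (X.N n)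

end CyclicModule
-- scratch: aux lemmas
section helpers
variable {k : Type u} [CommRing k]

lemma lsum_comp {M N P : Type v} [AddCommGroup M] [Module k M] [AddCommGroup N] [Module k N]
    [AddCommGroup P] [Module k P] {ι : Type*} (s : Finset ι) (f : ι → (N →ₗ[k] P))
    (g : M →ₗ[k] N) : (∑ i ∈ s, f i) ∘ₗ g = ∑ i ∈ s, (f i ∘ₗ g) := by
  ext x; simp [LinearMap.sum_apply]

lemma lcomp_sum {M N P : Type v} [AddCommGroup M] [Module k M] [AddCommGroup N] [Module k N]
    [AddCommGroup P] [Module k P] {ι : Type*} (s : Finset ι) (f : ι → (M →ₗ[k] N))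
    (g : N →ₗ[k] P) : g ∘ₗ (∑ i ∈ s, f i) = ∑ i ∈ s, (g ∘ₗ f i) := by
  ext x; simp [LinearMap.sum_apply, map_sum]

end helpers

namespace CyclicModule
variable {k : Type u} [CommRing k] (X : CyclicModule k)

/-- The signed face map `(-1)^i dᵢ`. -/
noncomputable def DD (n : ℕ) (i : Fin (n + 2)) : X.M (n + 1) →ₗ[k] X.M n :=
  ((-1 : k) ^ (i : ℕ)) • X.d n i

lemma b_eq (n : ℕ) : X.b n = ∑ i : Fin (n + 2), X.DD n i := rfl

lemma b'_eq (n : ℕ) : X.b' n = ∑ i : Fin (n + 1), X.DD n i.castSucc := rfl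

lemma t_pow_eq_one (n : ℕ) : (X.t n : Module.End k (X.M n)) ^ (n + 1) = 1 := by
  show (((-1 : k) ^ n) • X.c n : Module.End k (X.M n)) ^ (n+1) = 1
  rw [smul_pow, X.c_pow n, ← pow_mul, (Nat.even_mul_succ_self n).neg_one_pow, one_smul]

lemma DD_succ_t (n : ℕ) (j : Fin (n + 1)) :
    X.DD n j.succ ∘ₗ X.t (n + 1) = X.t n ∘ₗ X.DD n j.castSucc := by
  show (((-1:k) ^ (j.succ : ℕ)) • X.d n j.succ) ∘ₗ (((-1:k)^(n+1)) • X.c (n+1))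
      = (((-1:k)^n) • X.c n) ∘ₗ (((-1:k) ^ (j.castSucc : ℕ)) • X.d n j.castSucc)
  rw [LinearMap.comp_smul, LinearMap.smul_comp, LinearMap.smul_comp, LinearMap.comp_smul,
    X.d_comp_c n j, smul_smul, smul_smul, Fin.val_succ, Fin.coe_castSucc, pow_succ, pow_succ]
  ring_nf

lemma DD_zero_t (n : ℕ) :
    X.DD n 0 ∘ₗ X.t (n + 1) = X.DD n (Fin.last (n + 1)) := by
  show (((-1:k) ^ ((0 : Fin (n+2)) : ℕ)) • X.d n 0) ∘ₗ (((-1:k)^(n+1)) • X.c (n+1))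
      = ((-1:k) ^ ((Fin.last (n+1) : Fin (n+2)) : ℕ)) • X.d n (Fin.last (n+1))
  rw [LinearMap.comp_smul, LinearMap.smul_comp, X.d_zero_c n]
  simp [smul_smul, Fin.val_last]

end CyclicModule
namespace CyclicModule
variable {k : Type u} [CommRing k] (X : CyclicModule k)

lemma DD_succ_eq (n : ℕ) (j : Fin (n + 1)) :
    X.DD n j.succ = X.t n ∘ₗ (X.DD n j.castSucc ∘ₗ ((X.t (n+1) : Module.End k (X.M (n+1))) ^ (n+1))) := by
  have h1 : X.DD n j.succ = X.DD n j.succ ∘ₗ ((X.t (n+1) : Module.End k (X.M (n+1))) ^ (n+2)) := by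
    rw [X.t_pow_eq_one (n+1)]
    rfl
  rw [h1, pow_succ', Module.End.mul_eq_comp, ← LinearMap.comp_assoc, X.DD_succ_t n j,
    LinearMap.comp_assoc]

lemma t_comp_N (n : ℕ) : X.t n ∘ₗ X.N n = X.N n := by
  show ((X.t n : Module.End k (X.M n)) * X.N n) = X.N n
  unfold N
  rw [Finset.mul_sum]
  calc ∑ i ∈ Finset.range (n + 1), X.t n * (X.t n : Module.End k (X.M n)) ^ i
      = ∑ i ∈ Finset.range (n + 1), (X.t n : Module.End k (X.M n)) ^ (i + 1) := by
        simp [pow_succ']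
    _ = ∑ i ∈ Finset.range n, (X.t n : Module.End k (X.M n)) ^ (i + 1)
          + (X.t n : Module.End k (X.M n)) ^ (n + 1) := Finset.sum_range_succ _ n
    _ = ∑ i ∈ Finset.range n, (X.t n : Module.End k (X.M n)) ^ (i + 1)
          + (X.t n : Module.End k (X.M n)) ^ 0 := by rw [X.t_pow_eq_one n, pow_zero]
    _ = ∑ i ∈ Finset.range (n + 1), (X.t n : Module.End k (X.M n)) ^ i :=
        (Finset.sum_range_succ' _ n).symm

lemma N_comp_t (n : ℕ) : X.N n ∘ₗ X.t n = X.N n := by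
  show (X.N n * (X.t n : Module.End k (X.M n))) = X.N n
  unfold N
  rw [Finset.sum_mul]
  calc ∑ i ∈ Finset.range (n + 1), (X.t n : Module.End k (X.M n)) ^ i * X.t n
      = ∑ i ∈ Finset.range (n + 1), (X.t n : Module.End k (X.M n)) ^ (i + 1) := by
        simp [pow_succ]
    _ = ∑ i ∈ Finset.range n, (X.t n : Module.End k (X.M n)) ^ (i + 1)
          + (X.t n : Module.End k (X.M n)) ^ (n + 1) := Finset.sum_range_succ _ n
    _ = ∑ i ∈ Finset.range n, (X.t n : Module.End k (X.M n)) ^ (i + 1)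
          + (X.t n : Module.End k (X.M n)) ^ 0 := by rw [X.t_pow_eq_one n, pow_zero]
    _ = ∑ i ∈ Finset.range (n + 1), (X.t n : Module.End k (X.M n)) ^ i :=
        (Finset.sum_range_succ' _ n).symm

lemma one_sub_t_comp_N (n : ℕ) : (LinearMap.id - X.t n) ∘ₗ X.N n = 0 := by
  rw [LinearMap.sub_comp, X.t_comp_N, LinearMap.id_comp, sub_self]

end CyclicModule
namespace CyclicModule
variable {k : Type u} [CommRing k] (X : CyclicModule k)

lemma DD_succ_comp_N (n : ℕ) (j : Fin (n + 1)) :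
    X.DD n j.succ ∘ₗ X.N (n + 1) = X.t n ∘ₗ (X.DD n j.castSucc ∘ₗ X.N (n + 1)) := by
  unfold N
  rw [lcomp_sum, lcomp_sum, lcomp_sum]
  have key : ∀ l : ℕ, X.DD n j.succ ∘ₗ ((X.t (n+1) : Module.End k (X.M (n+1))) ^ (l+1))
      = X.t n ∘ₗ (X.DD n j.castSucc ∘ₗ ((X.t (n+1) : Module.End k (X.M (n+1))) ^ l)) := by
    intro l
    rw [pow_succ', Module.End.mul_eq_comp, ← LinearMap.comp_assoc, X.DD_succ_t n j,
      LinearMap.comp_assoc]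
  rw [Finset.sum_range_succ' (fun l => X.DD n j.succ ∘ₗ ((X.t (n+1) : Module.End k (X.M (n+1))) ^ l)) (n+1),
    Finset.sum_range_succ (fun l => X.t n ∘ₗ (X.DD n j.castSucc ∘ₗ ((X.t (n+1) : Module.End k (X.M (n+1))) ^ l))) (n+1)]
  congr 1
  · exact Finset.sum_congr rfl fun l _ => key l
  · rw [pow_zero]
    show X.DD n j.succ ∘ₗ (LinearMap.id) = _
    rw [LinearMap.comp_id]
    exact X.DD_succ_eq n j

lemma DD_comp_N_aux (n : ℕ) : ∀ (m : ℕ) (h : m < n + 1),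
    X.DD n (Fin.castSucc ⟨m, h⟩) ∘ₗ X.N (n + 1)
      = ((X.t n : Module.End k (X.M n)) ^ m) ∘ₗ (X.DD n 0 ∘ₗ X.N (n + 1)) := by
  intro m
  induction m with
  | zero =>
    intro h
    have h0 : (Fin.castSucc (⟨0, h⟩ : Fin (n+1))) = (0 : Fin (n+2)) := rfl
    rw [h0, pow_zero]
    show _ = LinearMap.id ∘ₗ _
    rw [LinearMap.id_comp]
  | succ m ih =>
    intro h
    have hm : m < n + 1 := Nat.lt_of_succ_lt h
    have hs : (Fin.castSucc (⟨m+1, h⟩ : Fin (n+1))) = (⟨m, hm⟩ : Fin (n+1)).succ := rfl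
    rw [hs, X.DD_succ_comp_N n ⟨m, hm⟩, ih hm, pow_succ', Module.End.mul_eq_comp,
      LinearMap.comp_assoc]

lemma b'_comp_N (n : ℕ) : X.b' n ∘ₗ X.N (n + 1) = X.N n ∘ₗ (X.d n 0 ∘ₗ X.N (n + 1)) := by
  rw [X.b'_eq, lsum_comp]
  have h1 : ∀ i : Fin (n+1), X.DD n i.castSucc ∘ₗ X.N (n + 1)
      = ((X.t n : Module.End k (X.M n)) ^ (i : ℕ)) ∘ₗ (X.DD n 0 ∘ₗ X.N (n + 1)) := by
    intro i
    have := X.DD_comp_N_aux n i.1 i.2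
    simpa using this
  rw [Finset.sum_congr rfl (fun i _ => h1 i), ← lsum_comp]
  have h2 : (∑ i : Fin (n+1), ((X.t n : Module.End k (X.M n)) ^ (i : ℕ))) = X.N n := by
    rw [Fin.sum_univ_eq_sum_range]; rfl
  rw [h2]
  have h3 : X.DD n 0 = X.d n 0 := by
    show ((-1:k) ^ ((0 : Fin (n+2)) : ℕ)) • X.d n 0 = X.d n 0
    simp
  rw [h3]

end CyclicModule
namespace CyclicModule
variable {k : Type u} [CommRing k] (X : CyclicModule k)

lemma N_DD_succ_t (n : ℕ) (j : Fin (n + 1)) :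
    (X.N n ∘ₗ X.DD n j.succ) ∘ₗ X.t (n + 1) = X.N n ∘ₗ X.DD n j.castSucc := by
  rw [LinearMap.comp_assoc, X.DD_succ_t n j, ← LinearMap.comp_assoc, X.N_comp_t]

lemma N_DD_aux (n : ℕ) : ∀ (m : ℕ) (h : m < n + 2),
    X.N n ∘ₗ X.DD n ⟨m, h⟩
      = (X.N n ∘ₗ X.DD n 0) ∘ₗ ((X.t (n+1) : Module.End k (X.M (n+1))) ^ (n + 2 - m)) := by
  intro m
  induction m with
  | zero =>
    intro h
    rw [Nat.sub_zero, X.t_pow_eq_one (n+1)]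
    show _ = _ ∘ₗ LinearMap.id
    rw [LinearMap.comp_id]
    rfl
  | succ m ih =>
    intro h
    have hm : m < n + 2 := Nat.lt_of_succ_lt h
    have hm1 : m < n + 1 := by omega
    have hs : (⟨m + 1, h⟩ : Fin (n + 2)) = (⟨m, hm1⟩ : Fin (n + 1)).succ := rfl
    have hc : (⟨m, hm⟩ : Fin (n + 2)) = (⟨m, hm1⟩ : Fin (n + 1)).castSucc := rfl
    have e1 : X.N n ∘ₗ X.DD n (⟨m, hm1⟩ : Fin (n + 1)).succ
        = (X.N n ∘ₗ X.DD n (⟨m, hm1⟩ : Fin (n + 1)).castSucc) ∘ₗ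
            ((X.t (n+1) : Module.End k (X.M (n+1))) ^ (n + 1)) := by
      conv_lhs => rw [show X.N n ∘ₗ X.DD n (⟨m, hm1⟩ : Fin (n + 1)).succ
        = (X.N n ∘ₗ X.DD n (⟨m, hm1⟩ : Fin (n + 1)).succ) ∘ₗ
            ((X.t (n+1) : Module.End k (X.M (n+1))) ^ (n + 2)) by
          rw [X.t_pow_eq_one (n+1)]; exact (LinearMap.comp_id _).symm]
      rw [pow_succ', Module.End.mul_eq_comp, ← LinearMap.comp_assoc, X.N_DD_succ_t n ⟨m, hm1⟩]
    have hexp : n + 2 - m + (n + 1) = (n + 2) + (n + 2 - (m+1)) := by omega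
    rw [hs, e1, ← hc, ih hm, LinearMap.comp_assoc, ← Module.End.mul_eq_comp, ← pow_add, hexp,
      pow_add, X.t_pow_eq_one (n+1), one_mul]

lemma N_comp_b (n : ℕ) : X.N n ∘ₗ X.b n = X.N n ∘ₗ (X.d n 0 ∘ₗ X.N (n + 1)) := by
  rw [X.b_eq, lcomp_sum]
  have h1 : ∀ m : Fin (n + 2), X.N n ∘ₗ X.DD n m
      = (X.N n ∘ₗ X.DD n 0) ∘ₗ ((X.t (n+1) : Module.End k (X.M (n+1))) ^ (n + 2 - (m : ℕ))) := by
    intro m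
    have := X.N_DD_aux n m.1 m.2
    simpa using this
  rw [Finset.sum_congr rfl (fun m _ => h1 m), ← lcomp_sum,
    Fin.sum_univ_eq_sum_range (fun j => (X.t (n+1) : Module.End k (X.M (n+1))) ^ (n + 2 - j)) (n+2)]
  have h2 : (∑ m ∈ Finset.range (n + 2), ((X.t (n+1) : Module.End k (X.M (n+1))) ^ (n + 2 - m)))
      = X.N (n + 1) := by
    have h3 : ∀ m ∈ Finset.range (n + 2),
        ((X.t (n+1) : Module.End k (X.M (n+1))) ^ (n + 2 - m))
          = (fun j => (X.t (n+1) : Module.End k (X.M (n+1))) ^ (j + 1)) (n + 2 - 1 - m) := by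
      intro m hm
      simp only []
      congr 1
      have := Finset.mem_range.mp hm
      omega
    rw [Finset.sum_congr rfl h3, Finset.sum_range_reflect (fun j => (X.t (n+1) : Module.End k (X.M (n+1))) ^ (j + 1)) (n+2)]
    calc (∑ j ∈ Finset.range (n + 2), (X.t (n+1) : Module.End k (X.M (n+1))) ^ (j + 1))
        = ∑ j ∈ Finset.range (n + 2), (X.t (n+1)) * (X.t (n+1) : Module.End k (X.M (n+1))) ^ j := by
          simp [pow_succ']
      _ = (X.t (n+1)) * ∑ j ∈ Finset.range (n + 2), (X.t (n+1) : Module.End k (X.M (n+1))) ^ j :=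
          (Finset.mul_sum _ _ _).symm
      _ = X.t (n+1) ∘ₗ X.N (n+1) := rfl
      _ = X.N (n + 1) := X.t_comp_N (n+1)
  rw [h2]
  have h3 : X.DD n 0 = X.d n 0 := by
    show ((-1:k) ^ ((0 : Fin (n+2)) : ℕ)) • X.d n 0 = X.d n 0
    simp
  rw [h3, LinearMap.comp_assoc]

lemma N_comp_b_eq (n : ℕ) : X.N n ∘ₗ X.b n = X.b' n ∘ₗ X.N (n + 1) := by
  rw [X.N_comp_b, X.b'_comp_N]

end CyclicModule
namespace CyclicModule
variable {k : Type u} [CommRing k] (X : CyclicModule k)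

lemma b_comp_t (n : ℕ) :
    X.b n ∘ₗ X.t (n + 1) = X.t n ∘ₗ X.b' n + X.DD n (Fin.last (n + 1)) := by
  rw [X.b_eq, lsum_comp, Fin.sum_univ_succ, X.DD_zero_t,
    Finset.sum_congr rfl (fun j _ => X.DD_succ_t n j), ← lcomp_sum, ← X.b'_eq]
  exact add_comm _ _

lemma b_eq_b'_add (n : ℕ) : X.b n = X.b' n + X.DD n (Fin.last (n + 1)) := by
  rw [X.b_eq, Fin.sum_univ_castSucc, X.b'_eq]

lemma b_comp_one_sub_t (n : ℕ) :
    X.b n ∘ₗ (LinearMap.id - X.t (n + 1)) = (LinearMap.id - X.t n) ∘ₗ X.b' n := by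
  rw [LinearMap.comp_sub, LinearMap.sub_comp, LinearMap.comp_id, LinearMap.id_comp,
    X.b_comp_t, X.b_eq_b'_add]
  abel

lemma b'_sNeg_zero : X.b' 0 ∘ₗ X.sNeg 0 = LinearMap.id := by
  rw [X.b'_eq 0, Fin.sum_univ_one]
  show (((-1:k) ^ (((0 : Fin 1).castSucc : Fin 2) : ℕ)) • X.d 0 (0 : Fin 1).castSucc) ∘ₗ
      (X.c 1 ∘ₗ X.s 0 (Fin.last 0)) = LinearMap.id
  have h0 : ((0 : Fin 1).castSucc : Fin 2) = 0 := rfl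
  rw [h0]
  simp only [Fin.val_zero, pow_zero, one_smul]
  rw [← LinearMap.comp_assoc, X.d_zero_c 0]
  have h2 : Fin.last 1 = (0 : Fin 1).succ := rfl
  have h3 : Fin.last 0 = (0 : Fin 1) := rfl
  rw [h2, h3]
  exact X.d_comp_s_succ 0 0

lemma face_sNeg_succ (n : ℕ) (j : Fin (n + 1)) :
    X.d (n + 1) (j.succ.castSucc) ∘ₗ X.sNeg (n + 1) = X.sNeg n ∘ₗ X.d n j.castSucc := by
  show X.d (n + 1) (j.succ.castSucc) ∘ₗ (X.c (n + 2) ∘ₗ X.s (n + 1) (Fin.last (n + 1)))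
      = (X.c (n + 1) ∘ₗ X.s n (Fin.last n)) ∘ₗ X.d n j.castSucc
  have h1 : (j.succ.castSucc : Fin (n + 3)) = ((j.castSucc : Fin (n + 2))).succ := by
    ext; simp
  have h2 : Fin.last (n + 1) = (Fin.last n).succ := rfl
  have hle : ((j.castSucc : Fin (n + 2)) : ℕ) ≤ ((Fin.last n : Fin (n + 1)) : ℕ) := by
    simp only [Fin.coe_castSucc, Fin.val_last]
    omega
  rw [h1, ← LinearMap.comp_assoc, X.d_comp_c (n + 1) j.castSucc, LinearMap.comp_assoc, h2,
    X.d_comp_s_le n j.castSucc (Fin.last n) hle, LinearMap.comp_assoc]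

lemma DD_sNeg_succ (n : ℕ) (j : Fin (n + 1)) :
    X.DD (n + 1) (j.succ.castSucc) ∘ₗ X.sNeg (n + 1) = -(X.sNeg n ∘ₗ X.DD n j.castSucc) := by
  show (((-1:k) ^ ((j.succ.castSucc : Fin (n + 3)) : ℕ)) • X.d (n + 1) j.succ.castSucc) ∘ₗ
      X.sNeg (n + 1) = -(X.sNeg n ∘ₗ (((-1:k) ^ ((j.castSucc : Fin (n + 2)) : ℕ)) • X.d n j.castSucc))
  rw [LinearMap.smul_comp, X.face_sNeg_succ n j, LinearMap.comp_smul]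
  have hc : ((-1:k) ^ ((j.succ.castSucc : Fin (n + 3)) : ℕ))
      = -((-1:k) ^ ((j.castSucc : Fin (n + 2)) : ℕ)) := by
    simp [pow_succ]
  rw [hc, neg_smul]

lemma DD_zero_sNeg (n : ℕ) :
    X.DD (n + 1) ((0 : Fin (n + 2)).castSucc) ∘ₗ X.sNeg (n + 1) = LinearMap.id := by
  show (((-1:k) ^ (((0 : Fin (n + 2)).castSucc : Fin (n + 3)) : ℕ)) •
      X.d (n + 1) (0 : Fin (n + 2)).castSucc) ∘ₗ
      (X.c (n + 2) ∘ₗ X.s (n + 1) (Fin.last (n + 1))) = LinearMap.id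
  have h0 : ((0 : Fin (n + 2)).castSucc : Fin (n + 3)) = 0 := rfl
  rw [h0]
  simp only [Fin.val_zero, pow_zero, one_smul]
  rw [← LinearMap.comp_assoc, X.d_zero_c (n + 1)]
  have h2 : Fin.last (n + 2) = (Fin.last (n + 1)).succ := rfl
  rw [h2]
  exact X.d_comp_s_succ (n + 1) (Fin.last (n + 1))

lemma homotopy (n : ℕ) :
    X.b' (n + 1) ∘ₗ X.sNeg (n + 1) + X.sNeg n ∘ₗ X.b' n = LinearMap.id := by
  rw [X.b'_eq (n + 1), lsum_comp, Fin.sum_univ_succ, X.DD_zero_sNeg n,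
    Finset.sum_congr rfl (fun j _ => X.DD_sNeg_succ n j), X.b'_eq n, lcomp_sum]
  simp only [Finset.sum_neg_distrib]
  abel

end CyclicModule

/-- For every cyclic `k`-module `M`, the Hochschild boundary `b` and the Connes operator `B`
anticommute: for `n ≥ 1` (here `n+1`), `b ∘ B + B ∘ b = 0` on `M (n+1)`, and for `n = 0` the
identity reads `b ∘ B = 0` on `M 0`. -/
theorem b_comp_B_anticomm {k : Type u} [CommRing k] (X : CyclicModule k) :
    (∀ n : ℕ, (X.b (n + 1)) ∘ₗ (X.B (n + 1)) + (X.B n) ∘ₗ (X.b n) = 0) ∧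
      (X.b 0) ∘ₗ (X.B 0) = 0 := by
  constructor
  · intro n
    have e1 : X.b (n + 1) ∘ₗ X.B (n + 1)
        = (LinearMap.id - X.t (n + 1)) ∘ₗ
            ((X.b' (n + 1) ∘ₗ X.sNeg (n + 1)) ∘ₗ X.N (n + 1)) := by
      show X.b (n + 1) ∘ₗ ((LinearMap.id - X.t (n + 2)) ∘ₗ (X.sNeg (n + 1) ∘ₗ X.N (n + 1))) = _
      rw [← LinearMap.comp_assoc, X.b_comp_one_sub_t (n + 1), LinearMap.comp_assoc,
        ← LinearMap.comp_assoc (X.N (n + 1)) (X.sNeg (n + 1)) (X.b' (n + 1))]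
    have e2 : X.B n ∘ₗ X.b n
        = (LinearMap.id - X.t (n + 1)) ∘ₗ ((X.sNeg n ∘ₗ X.b' n) ∘ₗ X.N (n + 1)) := by
      show ((LinearMap.id - X.t (n + 1)) ∘ₗ (X.sNeg n ∘ₗ X.N n)) ∘ₗ X.b n = _
      rw [LinearMap.comp_assoc, LinearMap.comp_assoc, X.N_comp_b_eq n,
        ← LinearMap.comp_assoc (X.N (n+1)) (X.b' n) (X.sNeg n)]
    rw [e1, e2, ← LinearMap.comp_add, ← LinearMap.add_comp, X.homotopy n, LinearMap.id_comp,
      X.one_sub_t_comp_N (n + 1)]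
  · have e1 : X.b 0 ∘ₗ X.B 0
        = (LinearMap.id - X.t 0) ∘ₗ ((X.b' 0 ∘ₗ X.sNeg 0) ∘ₗ X.N 0) := by
      show X.b 0 ∘ₗ ((LinearMap.id - X.t 1) ∘ₗ (X.sNeg 0 ∘ₗ X.N 0)) = _
      rw [← LinearMap.comp_assoc, X.b_comp_one_sub_t 0, LinearMap.comp_assoc,
        ← LinearMap.comp_assoc (X.N 0) (X.sNeg 0) (X.b' 0)]
    rw [e1, X.b'_sNeg_zero, LinearMap.id_comp, X.one_sub_t_comp_N 0]
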